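/- Let $k$ be a field, $B = k[t]/(t^{dm})$ and let $A \subseteq B$ be a $k$-subalgebra such that $B$ is a free $A$-module of rank $d$ (with $m, d \geq 1$). Then $A$ is a local $k$-algebra whose maximal ideal is principal; in particular $A \cong k[t]/(t^m)$. -/

import Mathlib

set_option synthInstance.maxHeartbeats 1000000
set_option maxHeartbeats 1000000

open Polynomial Module

namespace Stmt1Aux

variable {k : Type*} [Field k] {n : ℕ}

/-- `Q k n = k[X]/(X^n)`. -/
noncomputable abbrev Q (k : Type*) [Field k] (n : ℕ) : Type _ := AdjoinRoot ((X : k[X]) ^ n)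

/-- the image of `X`. -/
noncomputable abbrev t (k : Type*) [Field k] (n : ℕ) : Q k n := AdjoinRoot.root _

noncomputable def pb (k : Type*) [Field k] (n : ℕ) : PowerBasis k (Q k n) :=
  AdjoinRoot.powerBasis (pow_ne_zero n X_ne_zero)

lemma pb_dim : (pb k n).dim = n := by
  simp [pb, AdjoinRoot.powerBasis]

lemma pb_gen : (pb k n).gen = t k n := rfl

/-- the basis `1, t, ..., t^(n-1)`. -/
noncomputable def bQ (k : Type*) [Field k] (n : ℕ) : Basis (Fin n) k (Q k n) :=
  (pb k n).basis.reindex (finCongr pb_dim)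

lemma bQ_apply (i : Fin n) : bQ k n i = t k n ^ (i : ℕ) := by
  simp [bQ, Basis.reindex_apply, (pb k n).basis_eq_pow, pb_gen]

lemma finiteDimensional_Q : FiniteDimensional k (Q k n) :=
  Module.Finite.of_basis (bQ k n)

lemma finrank_Q : finrank k (Q k n) = n := by
  rw [finrank_eq_card_basis (bQ k n), Fintype.card_fin]

lemma t_pow_self : t k n ^ n = 0 := by
  have : (AdjoinRoot.mk ((X : k[X]) ^ n)) ((X : k[X]) ^ n) = 0 := AdjoinRoot.mk_self
  rwa [map_pow, AdjoinRoot.mk_X] at this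

lemma t_pow_eq_zero {j : ℕ} (hj : n ≤ j) : t k n ^ j = 0 := by
  have h := t_pow_self (k := k) (n := n)
  calc t k n ^ j = t k n ^ n * t k n ^ (j - n) := by rw [← pow_add]; congr 1; omega
  _ = 0 := by rw [h, zero_mul]

lemma t_pow_ne_zero {j : ℕ} (hj : j < n) : t k n ^ j ≠ 0 := by
  have := (bQ k n).ne_zero ⟨j, hj⟩
  rwa [bQ_apply] at this

/-- decomposition of a nonzero element as `t^j * u` with `u` a unit. -/
lemma exists_unit {x : Q k n} (hx : x ≠ 0) :
    ∃ j : ℕ, j < n ∧ ∃ u : (Q k n)ˣ, x = t k n ^ j * (u : Q k n) := by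
  obtain ⟨p, rfl⟩ := AdjoinRoot.mk_surjective x
  have hp : p ≠ 0 := by rintro rfl; simp at hx
  set j := p.natTrailingDegree with hjdef
  have hdvd : (X : k[X]) ^ j ∣ p := X_pow_dvd_iff.2 fun d hd =>
    coeff_eq_zero_of_lt_natTrailingDegree hd
  obtain ⟨q, hq⟩ := hdvd
  have hq0 : q.coeff 0 ≠ 0 := by
    have h1 : p.coeff j ≠ 0 := by
      simpa [hjdef, Polynomial.trailingCoeff] using trailingCoeff_nonzero_iff_nonzero.2 hp
    have h2 : p.coeff j = q.coeff 0 := by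
      rw [hq]; simpa using (coeff_X_pow_mul q j 0)
    rwa [h2] at h1
  have hXq : ¬ (X : k[X]) ∣ q := by rwa [X_dvd_iff]
  have hcop : IsCoprime ((X : k[X]) ^ n) q :=
    ((Polynomial.irreducible_X).coprime_iff_not_dvd.2 hXq).pow_left
  obtain ⟨a, b, hab⟩ := hcop
  have hu : IsUnit (AdjoinRoot.mk ((X : k[X]) ^ n) q) := by
    refine IsUnit.of_mul_eq_one (AdjoinRoot.mk _ b) ?_
    have h3 := congrArg (AdjoinRoot.mk ((X : k[X]) ^ n)) hab
    simpa [map_add, map_mul, AdjoinRoot.mk_self, mul_comm] using h3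
  have hjn : j < n := by
    by_contra hge
    push_neg at hge
    apply hx
    rw [hq, map_mul, map_pow, AdjoinRoot.mk_X]
    rw [show AdjoinRoot.root ((X : k[X]) ^ n) = t k n from rfl, t_pow_eq_zero hge, zero_mul]
  refine ⟨j, hjn, hu.unit, ?_⟩
  rw [hq, map_mul, map_pow, AdjoinRoot.mk_X, IsUnit.unit_spec]

/-- elements `t^(j i) * u i` with distinct exponents are linearly independent. -/
lemma li_pow_mul {r : ℕ} {j : Fin r → ℕ} (hj : ∀ i, j i < n) (hinj : Function.Injective j)
    (u : Fin r → (Q k n)ˣ) :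
    LinearIndependent k (fun i => t k n ^ (j i) * (u i : Q k n)) := by
  classical
  rw [Fintype.linearIndependent_iff]
  intro g hg
  by_contra hcon
  push_neg at hcon
  obtain ⟨i₁, hi₁⟩ := hcon
  have hne : (Finset.univ.filter (fun i => g i ≠ 0)).Nonempty :=
    ⟨i₁, by simp [hi₁]⟩
  obtain ⟨i₀, hi₀mem, hi₀min⟩ := Finset.exists_min_image _ j hne
  have hgi₀ : g i₀ ≠ 0 := by simpa using hi₀mem
  set c : Q k n := t k n ^ (n - 1 - j i₀) * ((u i₀)⁻¹ : (Q k n)ˣ) with hc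
  have key := congrArg (fun x => x * c) hg
  simp only [Finset.sum_mul, zero_mul] at key
  rw [Finset.sum_eq_single i₀] at key
  · have hji₀ : j i₀ < n := hj i₀
    have hterm : g i₀ • (t k n ^ (j i₀) * (u i₀ : Q k n)) * c = g i₀ • t k n ^ (n - 1) := by
      rw [hc, smul_mul_assoc]
      congr 1
      calc t k n ^ (j i₀) * (u i₀ : Q k n) * (t k n ^ (n - 1 - j i₀) * ((u i₀)⁻¹ : (Q k n)ˣ))
          = (t k n ^ (j i₀) * t k n ^ (n - 1 - j i₀)) * ((u i₀ : Q k n) * ((u i₀)⁻¹ : (Q k n)ˣ)) := by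
            ring
        _ = t k n ^ (n - 1) := by
            rw [← pow_add, Units.mul_inv, mul_one]
            congr 1
            omega
    rw [hterm] at key
    rcases smul_eq_zero.1 key with h | h
    · exact hgi₀ h
    · exact t_pow_ne_zero (by omega) h
  · intro i _ hne'
    by_cases hgi : g i = 0
    · simp [hgi]
    · have hlt : j i₀ < j i := by
        have hle := hi₀min i (by simp [hgi])
        rcases lt_or_eq_of_le hle with h | h
        · exact h
        · exact absurd (hinj h).symm hne'
      have hz : t k n ^ (j i) * t k n ^ (n - 1 - j i₀) = 0 := by
        rw [← pow_add]; exact t_pow_eq_zero (by omega)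
      calc g i • (t k n ^ (j i) * (u i : Q k n)) * c
          = g i • ((t k n ^ (j i) * t k n ^ (n - 1 - j i₀)) * ((u i : Q k n) * ((u i₀)⁻¹ : (Q k n)ˣ))) := by
            rw [hc, smul_mul_assoc]; congr 1; ring
      _ = 0 := by rw [hz, zero_mul, smul_zero]
  · intro h; exact absurd (Finset.mem_univ i₀) h


noncomputable def eps (k : Type*) [Field k] (n : ℕ) (hn : 0 < n) : Q k n →ₐ[k] k :=
  AdjoinRoot.liftAlgHom _ (Algebra.ofId k k) 0 (by simp [zero_pow hn.ne'])

lemma eps_t (hn : 0 < n) : eps k n hn (t k n) = 0 := by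
  exact AdjoinRoot.liftAlgHom_root _ _ _ _

lemma nontrivial_Q (hn : 0 < n) : Nontrivial (Q k n) := by
  refine ⟨1, 0, ?_⟩
  have := t_pow_ne_zero (k := k) (n := n) (j := 0) hn
  simpa using this

lemma isUnit_of_eps_ne {hn : 0 < n} {x : Q k n} (h : eps k n hn x ≠ 0) : IsUnit x := by
  have hx : x ≠ 0 := by rintro rfl; simp at h
  obtain ⟨j, hjn, u, rfl⟩ := exists_unit hx
  rcases Nat.eq_zero_or_pos j with rfl | hj
  · simpa using u.isUnit
  · exfalso
    apply h
    rw [map_mul, map_pow, eps_t, zero_pow hj.ne', zero_mul]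

lemma isNilpotent_of_eps_eq {hn : 0 < n} {x : Q k n} (h : eps k n hn x = 0) : IsNilpotent x := by
  by_cases hx : x = 0
  · exact hx ▸ IsNilpotent.zero
  obtain ⟨j, hjn, u, rfl⟩ := exists_unit hx
  rcases Nat.eq_zero_or_pos j with rfl | hj
  · exfalso
    rw [pow_zero, one_mul] at h
    exact ((u.isUnit.map (eps k n hn)).ne_zero h).elim
  · refine ⟨n, ?_⟩
    rw [mul_pow, ← pow_mul, t_pow_eq_zero (Nat.le_mul_of_pos_left n hj), zero_mul]

lemma isLocalRing_Q (hn : 0 < n) : IsLocalRing (Q k n) := by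
  have := nontrivial_Q (k := k) hn
  refine IsLocalRing.of_isUnit_or_isUnit_one_sub_self fun a => ?_
  by_cases h : eps k n hn a = 0
  · exact Or.inr (isNilpotent_of_eps_eq h).isUnit_one_sub
  · exact Or.inl (isUnit_of_eps_ne h)

lemma span_t_pow_eq {j : ℕ} (hj : j ≤ n) :
    Submodule.restrictScalars k (Ideal.span {t k n ^ j}) =
      Submodule.span k (Set.range fun i : Fin (n - j) => t k n ^ (j + (i : ℕ))) := by
  apply le_antisymm
  · intro x hx
    rw [Submodule.restrictScalars_mem, Ideal.mem_span_singleton] at hx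
    obtain ⟨c, rfl⟩ := hx
    rw [← Basis.sum_repr (bQ k n) c, Finset.mul_sum]
    refine Submodule.sum_mem _ fun i _ => ?_
    rw [bQ_apply, mul_smul_comm, ← pow_add]
    by_cases hin : j + (i : ℕ) < n
    · refine Submodule.smul_mem _ _ (Submodule.subset_span ?_)
      exact ⟨⟨(i : ℕ), by omega⟩, rfl⟩
    · rw [t_pow_eq_zero (by omega), smul_zero]
      exact Submodule.zero_mem _
  · rw [Submodule.span_le]
    rintro x ⟨i, rfl⟩
    rw [SetLike.mem_coe, Submodule.restrictScalars_mem, Ideal.mem_span_singleton]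
    exact ⟨t k n ^ (i : ℕ), by rw [← pow_add]⟩

lemma finrank_span_t_pow {j : ℕ} (hj : j ≤ n) :
    finrank k (Submodule.restrictScalars k (Ideal.span {t k n ^ j})) = n - j := by
  rw [span_t_pow_eq hj]
  have hli : LinearIndependent k (fun i : Fin (n - j) => t k n ^ (j + (i : ℕ))) := by
    have h := li_pow_mul (k := k) (n := n) (r := n - j) (j := fun i => j + (i : ℕ))
      (fun i => by show j + (i:ℕ) < n; have := i.isLt; omega)
      (fun a b hab => by
        have h' : j + (a : ℕ) = j + (b : ℕ) := hab
        ext; omega) (fun _ => 1)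
    simpa using h
  rw [finrank_span_eq_card hli, Fintype.card_fin]


end Stmt1Aux

open Stmt1Aux Polynomial Module in
/-- Key structural result: existence of a "uniformizer" of `A`. -/
theorem Stmt1Aux.main (k : Type*) [Field k] (d m : ℕ) (hd : 1 ≤ d) (hm : 1 ≤ m)
    (A : Subalgebra k (Q k (d * m)))
    (hfree : Module.Free A (Q k (d * m)))
    (hrank : Module.finrank A (Q k (d * m)) = d) :
    ∃ a : A, a ^ m = 0 ∧ LinearIndependent k (fun i : Fin m => a ^ (i : ℕ)) ∧
      Module.finrank k A = m := by
  classical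
  have hn : 0 < d * m := by positivity
  haveI : FiniteDimensional k (Q k (d * m)) := finiteDimensional_Q
  haveI : Nontrivial (Q k (d * m)) := nontrivial_Q hn
  haveI : Nontrivial ↥A := ⟨0, 1, fun h => zero_ne_one (congrArg (A.val) h)⟩
  haveI : Module.Finite ↥A (Q k (d * m)) := Module.Finite.of_restrictScalars_finite k _ _
  haveI hfdA : FiniteDimensional k ↥A := inferInstance
  -- dimension of A over k is m
  have hA : finrank k ↥A = m := by
    have h1 := Module.finrank_mul_finrank k ↥A (Q k (d * m))
    rw [hrank, finrank_Q] at h1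
    exact Nat.eq_of_mul_eq_mul_right hd (h1.trans (mul_comm d m))
  -- the augmentation ideal of A
  set εA : ↥A →ₐ[k] k := (eps k (d * m) hn).comp A.val with hεA_def
  set I : Ideal ↥A := RingHom.ker εA.toRingHom with hI_def
  have hmemI : ∀ x : ↥A, x ∈ I ↔ εA x = 0 := fun x => Iff.rfl
  -- its k-dimension is m - 1
  have hIdim : finrank k (I.restrictScalars k) = m - 1 := by
    have hker : (I.restrictScalars k) = LinearMap.ker εA.toLinearMap := by
      ext x; rfl
    have hsurj : Function.Surjective εA.toLinearMap := by
      intro c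
      exact ⟨algebraMap k ↥A c, εA.commutes c⟩
    have h2 := LinearMap.finrank_range_add_finrank_ker εA.toLinearMap
    rw [LinearMap.range_eq_top.2 hsurj, finrank_top, finrank_self, hA] at h2
    rw [hker]; omega
  -- choose an A-basis of B
  set ι := Module.Free.ChooseBasisIndex ↥A (Q k (d * m)) with hι_def
  set e : Basis ι ↥A (Q k (d * m)) := Module.Free.chooseBasis ↥A (Q k (d * m)) with he_def
  have hcard : Fintype.card ι = d := by
    rw [← Module.finrank_eq_card_chooseBasisIndex, hrank]
  -- the map realizing I^d inside B
  set φ : (ι → ↥(I.restrictScalars k)) →ₗ[k] Q k (d * m) :=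
    { toFun := fun f => ∑ i, ((f i : ↥A) • e i)
      map_add' := by
        intro f g
        simp only [Pi.add_apply, Submodule.coe_add, add_smul]
        rw [Finset.sum_add_distrib]
      map_smul' := by
        intro c f
        simp only [Pi.smul_apply, SetLike.val_smul, RingHom.id_apply]
        rw [Finset.smul_sum]
        exact Finset.sum_congr rfl fun i _ => (smul_assoc c _ _) } with hφ_def
  have hφ_apply : ∀ f, φ f = ∑ i, ((f i : ↥A) • e i) := fun f => rfl
  have hφinj : Function.Injective φ := by
    rw [← LinearMap.ker_eq_bot, eq_bot_iff]
    intro f hf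
    have h0 : ∑ i, ((f i : ↥A)) • e i = 0 := hf
    have hz := (Fintype.linearIndependent_iff.mp e.linearIndependent) (fun i => (f i : ↥A)) h0
    simp only [Submodule.mem_bot]
    funext i
    exact Subtype.ext (hz i)
  set P : Submodule k (Q k (d * m)) := LinearMap.range φ with hP_def
  have hPdim : finrank k P = d * (m - 1) := by
    rw [hP_def, LinearMap.finrank_range_of_inj hφinj]
    rw [Module.finrank_pi_fintype, Finset.sum_const, hIdim, smul_eq_mul, Finset.card_univ, hcard]
  -- smul stability
  have hsmulI : ∀ a : ↥A, a ∈ I → ∀ y : Q k (d * m), a • y ∈ P := by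
    intro a ha y
    refine ⟨fun j => ⟨a * e.repr y j, I.mul_mem_right _ ha⟩, ?_⟩
    rw [hφ_apply]
    show ∑ j, ((a * e.repr y j) • e j) = a • y
    conv_rhs => rw [← Basis.sum_repr e y]
    rw [Finset.smul_sum]
    exact Finset.sum_congr rfl fun j _ => (smul_smul a _ _).symm
  -- the ideal generated by I in B
  set J : Ideal (Q k (d * m)) := Ideal.map (algebraMap ↥A (Q k (d * m))) I with hJ_def
  have halg : ∀ a : ↥A, algebraMap ↥A (Q k (d * m)) a = (a : Q k (d * m)) := fun a => rfl
  have hJP : J.restrictScalars k = P := by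
    apply le_antisymm
    · intro x hx
      rw [Submodule.restrictScalars_mem] at hx
      refine Submodule.span_induction ?_ ?_ ?_ ?_ hx
      · rintro y ⟨a, ha, rfl⟩
        rw [Algebra.algebraMap_eq_smul_one]
        exact hsmulI a ha 1
      · exact P.zero_mem
      · intro y z _ _ hy hz; exact P.add_mem hy hz
      · rintro b y _ ⟨f, rfl⟩
        rw [smul_eq_mul, hφ_apply, Finset.mul_sum]
        refine P.sum_mem fun i _ => ?_
        rw [mul_smul_comm]
        exact hsmulI _ (f i).2 _
    · rintro x ⟨f, rfl⟩
      rw [hφ_apply]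
      refine Submodule.sum_mem _ fun i _ => ?_
      rw [Submodule.restrictScalars_mem, Algebra.smul_def, halg]
      exact Ideal.mul_mem_right _ _ (Ideal.mem_map_of_mem _ (f i).2)
  have hJdim : finrank k (J.restrictScalars k) = d * (m - 1) := by rw [hJP, hPdim]
  -- arithmetic helper
  have harith : d * (m - 1) + d = d * m := by
    obtain ⟨p, rfl⟩ := Nat.exists_eq_add_of_le hm
    rw [show 1 + p - 1 = p from by omega]
    ring
  -- main case split
  rcases Nat.lt_or_ge m 2 with hm1 | hm2
  · -- m = 1
    have hm' : m = 1 := by omega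
    subst hm'
    refine ⟨0, by rw [pow_one], ?_, hA⟩
    have : (fun i : Fin 1 => (0 : ↥A) ^ (i : ℕ)) = fun _ : Fin 1 => (1 : ↥A) := by
      funext i
      have : (i : ℕ) = 0 := by omega
      rw [this, pow_zero]
    rw [this]
    exact linearIndependent_unique_iff.2 one_ne_zero
  · -- m ≥ 2 : find the uniformizer
    have hex : ∃ a : ↥A, a ∈ I ∧ (a : Q k (d * m)) ∉ Ideal.span {t k (d * m) ^ (d + 1)} := by
      by_contra hcon
      push_neg at hcon
      have hle : J ≤ Ideal.span {t k (d * m) ^ (d + 1)} := by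
        rw [hJ_def, Ideal.map_le_iff_le_comap]
        intro a ha
        rw [Ideal.mem_comap, halg]
        exact hcon a ha
      have hfin := Submodule.finrank_mono
        (show J.restrictScalars k ≤ (Ideal.span {t k (d * m) ^ (d + 1)}).restrictScalars k from hle)
      have hdm : d + 1 ≤ d * m := by
        have h2 := Nat.mul_le_mul_left d hm2
        omega
      rw [hJdim, finrank_span_t_pow hdm] at hfin
      have h3 : d ≤ d * (m - 1) := Nat.le_mul_of_pos_right d (by omega)
      omega
    obtain ⟨a, haI, hanot⟩ := hex
    have ha0 : (a : Q k (d * m)) ≠ 0 := by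
      rintro h
      exact hanot (h ▸ (Ideal.span {t k (d * m) ^ (d + 1)}).zero_mem)
    obtain ⟨j, hjn, u, hau⟩ := exists_unit ha0
    have hjle : j ≤ d := by
      by_contra hgt
      push_neg at hgt
      apply hanot
      rw [Ideal.mem_span_singleton, hau]
      exact Dvd.dvd.mul_right ⟨t k (d * m) ^ (j - (d+1)), by rw [← pow_add]; congr 1; omega⟩ _
    have hjge : d ≤ j := by
      by_contra hlt
      push_neg at hlt
      have htJ : t k (d * m) ^ j ∈ J := by
        have haJ : (a : Q k (d * m)) ∈ J := Ideal.mem_map_of_mem _ haI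
        have : t k (d * m) ^ j = (a : Q k (d * m)) * ((u⁻¹ : (Q k (d * m))ˣ) : Q k (d * m)) := by
          rw [hau, mul_assoc, Units.mul_inv, mul_one]
        rw [this]
        exact Ideal.mul_mem_right _ _ haJ
      have hle : Ideal.span {t k (d * m) ^ j} ≤ J := by
        rw [Ideal.span_le, Set.singleton_subset_iff]; exact htJ
      have hfin := Submodule.finrank_mono
        (show (Ideal.span {t k (d * m) ^ j}).restrictScalars k ≤ J.restrictScalars k from hle)
      rw [hJdim, finrank_span_t_pow (le_of_lt hjn)] at hfin
      omega
    have hjd : j = d := le_antisymm hjle hjge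
    rw [hjd] at hau
    -- a is the uniformizer
    have hpow : ∀ i : ℕ, ((a ^ i : ↥A) : Q k (d * m)) =
        t k (d * m) ^ (d * i) * ((u ^ i : (Q k (d * m))ˣ) : Q k (d * m)) := by
      intro i
      push_cast
      rw [hau, mul_pow, ← pow_mul]
    refine ⟨a, ?_, ?_, hA⟩
    · have hz : ((a ^ m : ↥A) : Q k (d * m)) = 0 := by
        rw [hpow m, t_pow_eq_zero (le_refl (d * m)), zero_mul]
      exact Subtype.ext hz
    · have hliB : LinearIndependent k (fun i : Fin m => t k (d * m) ^ (d * (i : ℕ)) *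
          ((u ^ (i : ℕ) : (Q k (d * m))ˣ) : Q k (d * m))) := by
        refine li_pow_mul (fun i => ?_) (fun i₁ i₂ h => ?_) _
        · show d * (i : ℕ) < d * m
          exact (Nat.mul_lt_mul_left hd).mpr i.isLt
        · have h' : d * (i₁ : ℕ) = d * (i₂ : ℕ) := h
          ext
          exact Nat.eq_of_mul_eq_mul_left hd h'
      refine LinearIndependent.of_comp A.val.toLinearMap ?_
      have hcomp : (A.val.toLinearMap ∘ fun i : Fin m => a ^ (i : ℕ)) =
          fun i : Fin m => t k (d * m) ^ (d * (i : ℕ)) *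
            ((u ^ (i : ℕ) : (Q k (d * m))ˣ) : Q k (d * m)) := by
        funext i
        exact hpow (i : ℕ)
      rw [hcomp]
      exact hliB

open Stmt1Aux Polynomial Module in
/-- If `A ⊆ B = k[t]/(t^{dm})` is a subalgebra such that `B` is a free
`A`-module of rank `d`, then `A` is local with principal maximal ideal, and
`A ≅ k[t]/(t^m)`. -/
theorem stmt_1 (k : Type*) [Field k] (d m : ℕ) (hd : 1 ≤ d) (hm : 1 ≤ m)
    (A : Subalgebra k (Polynomial k ⧸ Ideal.span {(Polynomial.X : Polynomial k) ^ (d * m)}))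
    (hfree : Module.Free A (Polynomial k ⧸ Ideal.span {(Polynomial.X : Polynomial k) ^ (d * m)}))
    (hrank : Module.finrank A
      (Polynomial k ⧸ Ideal.span {(Polynomial.X : Polynomial k) ^ (d * m)}) = d) :
    IsLocalRing A ∧ (∀ I : Ideal A, I.IsMaximal → I.IsPrincipal) ∧
      Nonempty (A ≃ₐ[k] (Polynomial k ⧸ Ideal.span {(Polynomial.X : Polynomial k) ^ m})) := by
  obtain ⟨a, ham, hli, hfr⟩ : ∃ a : ↥A, a ^ m = 0 ∧ LinearIndependent k (fun i : Fin m => a ^ (i : ℕ)) ∧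
      Module.finrank k ↥A = m := Stmt1Aux.main k d m hd hm A hfree hrank
  haveI : FiniteDimensional k
      (Polynomial k ⧸ Ideal.span {(Polynomial.X : Polynomial k) ^ (d * m)}) :=
    finiteDimensional_Q (k := k) (n := d * m)
  haveI : FiniteDimensional k ↥A := inferInstance
  haveI : FiniteDimensional k (Q k m) := finiteDimensional_Q
  haveI : Nonempty (Fin m) := ⟨⟨0, hm⟩⟩
  have haev : aeval a ((X : k[X]) ^ m) = 0 := by rw [map_pow, aeval_X, ham]
  set ψ : Q k m →ₐ[k] ↥A := AdjoinRoot.liftAlgHom _ (Algebra.ofId k ↥A) a haev with hψ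
  have hψroot : ψ (t k m) = a := AdjoinRoot.liftAlgHom_root _ _ _ _
  have hsurj : Function.Surjective ψ := by
    have hcardm : Fintype.card (Fin m) = finrank k ↥A := by
      rw [Fintype.card_fin]; exact hfr.symm
    set bA := basisOfLinearIndependentOfCardEqFinrank hli hcardm with hbA
    intro x
    refine ⟨∑ i : Fin m, (bA.repr x i) • (t k m ^ (i : ℕ)), ?_⟩
    rw [map_sum]
    conv_rhs => rw [← Basis.sum_repr bA x]
    refine Finset.sum_congr rfl fun i _ => ?_
    rw [map_smul, map_pow, hψroot]
    congr 1
    rw [hbA, coe_basisOfLinearIndependentOfCardEqFinrank]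
  have hinj : Function.Injective ψ := by
    have hEq : finrank k (Q k m) = finrank k ↥A := by
      rw [finrank_Q]; exact hfr.symm
    exact (LinearMap.injective_iff_surjective_of_finrank_eq_finrank hEq
      (f := ψ.toLinearMap)).2 hsurj
  set equivA : Q k m ≃ₐ[k] ↥A := AlgEquiv.ofBijective ψ ⟨hinj, hsurj⟩ with heq
  haveI hloc : IsLocalRing ↥A := by
    haveI := isLocalRing_Q (k := k) (n := m) hm
    exact equivA.toRingEquiv.isLocalRing
  haveI hpir : IsPrincipalIdealRing ↥A := by
    have hs : Function.Surjective (equivA.toAlgHom.toRingHom.comp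
        (AdjoinRoot.mk ((X : k[X]) ^ m))) :=
      equivA.surjective.comp AdjoinRoot.mk_surjective
    exact IsPrincipalIdealRing.of_surjective _ hs
  exact ⟨hloc, fun I _ => hpir.principal I, ⟨equivA.symm⟩⟩
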